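/- For nonzero complex numbers x_1,...,x_N, y_1,...,y_N with x_i ≠ y_j for all i,j, and any complex u, det[ 1/(y_j − x_i) + u/x_i ]_{i,j=1}^N = det[ 1/(y_j − x_i) ]_{i,j=1}^N · ( 1 + u·(−1 + ∏_{i=1}^N y_i/x_i) ). -/

import Mathlib

open Finset

private lemma det_row_smul_zero {N : ℕ} (M : Matrix (Fin N) (Fin N) ℂ)
    {i k : Fin N} (h : i ≠ k) (c : ℂ) (hrow : M i = c • M k) :
    M.det = 0 := by
  have h1 : M = M.updateRow i (c • M k) := by
    rw [← hrow, Matrix.updateRow_eq_self]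
  rw [h1, Matrix.det_updateRow_smul]
  have h2 : (M.updateRow i (M k)).det = 0 := by
    apply Matrix.det_zero_of_row_eq h
    rw [Matrix.updateRow_self, Matrix.updateRow_ne h.symm]
  rw [h2, mul_zero]

theorem stmt7 (N : ℕ) (x y : Fin N → ℂ)
    (hx : ∀ i, x i ≠ 0) (hy : ∀ j, y j ≠ 0)
    (hxy : ∀ i j, x i ≠ y j) (u : ℂ) :
    Matrix.det (Matrix.of fun i j : Fin N => 1 / (y j - x i) + u / x i)
    = Matrix.det (Matrix.of fun i j : Fin N => 1 / (y j - x i)) *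
      (1 + u * (-1 + ∏ i, y i / x i)) := by
  classical
  set a : Fin N → Fin N → ℂ := fun i j => 1 / (y j - x i) with ha
  set w : Fin N → Fin N → ℂ := fun i _ => 1 / x i with hw
  set d : Finset (Fin N) → ℂ := fun s => Matrix.det (Matrix.of (s.piecewise w a)) with hd
  -- key expansion
  have key : ∀ v : ℂ, Matrix.det (Matrix.of fun i j : Fin N => 1 / (y j - x i) + v / x i)
      = ∑ s : Finset (Fin N), v ^ s.card * d s := by
    intro v
    have h1 : (Matrix.of fun i j : Fin N => 1 / (y j - x i) + v / x i)
        = Matrix.of ((fun i => v • w i) + a) := by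
      ext i j
      simp only [Matrix.of_apply, Pi.add_apply, Pi.smul_apply, hw, ha, smul_eq_mul]
      rw [add_comm]
      ring
    rw [h1]
    have h2 := (Matrix.detRowAlternating (n := Fin N) (R := ℂ)).toMultilinearMap.map_add_univ
      (fun i => v • w i) a
    have h3 : ∀ s : Finset (Fin N),
        Matrix.detRowAlternating (s.piecewise (fun i => v • w i) a)
          = v ^ s.card * d s := by
      intro s
      have hpw : s.piecewise (fun i => v • w i) a
          = s.piecewise (fun i => v • (s.piecewise w a) i) (s.piecewise w a) := by
        funext i
        by_cases hi : i ∈ s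
        · simp [Finset.piecewise_eq_of_mem _ _ _ hi]
        · simp [Finset.piecewise_eq_of_notMem _ _ _ hi]
      rw [hpw]
      have := (Matrix.detRowAlternating (n := Fin N) (R := ℂ)).toMultilinearMap.map_piecewise_smul
        (fun _ => v) (s.piecewise w a) s
      simp only [Finset.prod_const, smul_eq_mul] at this
      exact this
    calc Matrix.det (Matrix.of ((fun i => v • w i) + a))
        = Matrix.detRowAlternating ((fun i => v • w i) + a) := rfl
      _ = ∑ s : Finset (Fin N), Matrix.detRowAlternating (s.piecewise (fun i => v • w i) a) := h2
      _ = ∑ s : Finset (Fin N), v ^ s.card * d s := by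
          exact Finset.sum_congr rfl fun s _ => h3 s
  -- vanishing for card ≥ 2
  have hvan : ∀ s : Finset (Fin N), 2 ≤ s.card → d s = 0 := by
    intro s hs
    obtain ⟨i, hi, k, hk, hik⟩ := Finset.one_lt_card.mp hs
    apply det_row_smul_zero (i := i) (k := k) _ hik (x k / x i)
    funext j
    simp only [Matrix.of_apply, Finset.piecewise_eq_of_mem _ _ _ hi,
      Finset.piecewise_eq_of_mem _ _ _ hk, hw, Pi.smul_apply, smul_eq_mul]
    field_simp
    rw [mul_comm (x i) (x k), ← div_div, div_self (hx k)]
  -- d ∅ = det A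
  have hempty : d ∅ = Matrix.det (Matrix.of fun i j : Fin N => 1 / (y j - x i)) := by
    simp [hd, ha]
  -- value at v = 1
  have hone : Matrix.det (Matrix.of fun i j : Fin N => 1 / (y j - x i) + 1 / x i)
      = (∏ i, y i / x i) * Matrix.det (Matrix.of fun i j : Fin N => 1 / (y j - x i)) := by
    have hentry : (Matrix.of fun i j : Fin N => 1 / (y j - x i) + 1 / x i)
        = Matrix.of fun i j => (x i)⁻¹ * ((Matrix.of fun i j : Fin N => y j * (1 / (y j - x i)))) i j := by
      ext i j
      have hne : y j - x i ≠ 0 := sub_ne_zero.mpr (fun h => hxy i j h.symm)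
      have h1 : x i ≠ 0 := hx i
      simp only [Matrix.of_apply]
      field_simp
      ring
    rw [hentry, Matrix.det_mul_column]
    have hcol : (Matrix.of fun i j : Fin N => y j * (1 / (y j - x i)))
        = Matrix.of fun i j => y j * ((Matrix.of fun i j : Fin N => 1 / (y j - x i)) i j) := rfl
    rw [hcol, Matrix.det_mul_row]
    rw [Finset.prod_div_distrib]
    field_simp
    simp only [Finset.prod_div_distrib, Finset.prod_const_one]
    ring
  rw [key u, ← hempty]
  have h1 : (1 : ℂ) + u * (-1 + ∏ i, y i / x i)
      = 1 - u + u * ∏ i, y i / x i := by ring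
  rw [h1]
  have hsum1 : ∑ s : Finset (Fin N), (1 : ℂ) ^ s.card * d s
      = Matrix.det (Matrix.of fun i j : Fin N => 1 / (y j - x i) + 1 / x i) := by
    rw [key 1]
  rw [hone, ← hempty] at hsum1
  -- now: Σ u^c d s = d ∅ * (1 - u) + u * Σ 1^c d s
  have goal2 : ∑ s : Finset (Fin N), u ^ s.card * d s
      = (∑ s : Finset (Fin N), (0:ℂ) ^ s.card * d s) * (1 - u)
        + u * ∑ s : Finset (Fin N), (1:ℂ) ^ s.card * d s := by
    rw [Finset.sum_mul, Finset.mul_sum, ← Finset.sum_add_distrib]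
    apply Finset.sum_congr rfl
    intro s _
    rcases Nat.lt_or_ge s.card 2 with hc | hc
    · interval_cases h : s.card <;> simp <;> ring
    · rw [hvan s hc]; ring
  have hzero : ∑ s : Finset (Fin N), (0:ℂ) ^ s.card * d s = d ∅ := by
    rw [Finset.sum_eq_single ∅]
    · simp
    · intro s _ hs
      rw [zero_pow (by simpa [Finset.card_eq_zero] using hs), zero_mul]
    · simp
  rw [goal2, hzero, hsum1]
  ring
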